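/- Let N ≥ 3, R̂ > 0, let ρ : ℝ^N → ℝ be continuous with ρ > 0 everywhere, and let ρ̄ : [R̂,∞) → ℝ be continuous with ρ(x) ≤ ρ̄(|x|) for every x with |x| ≥ R̂ and ∫_{R̂}^∞ η ρ̄(η) dη < ∞. Then there exists a twice continuously differentiable function v : [R̂,∞) → ℝ which is positive, nonincreasing, and satisfies v(r) → 0 as r → ∞, such that the radial function V(x) := v(|x|) satisfies ΔV(x) ≤ −ρ(x) for every x with |x| > R̂. -/

import Mathlib

open MeasureTheory Metric Set Filter

noncomputable def lap {N : ℕ} (f : EuclideanSpace ℝ (Fin N) → ℝ)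
    (x : EuclideanSpace ℝ (Fin N)) : ℝ :=
  ∑ i : Fin N, iteratedFDeriv ℝ 2 f x ![EuclideanSpace.single i 1, EuclideanSpace.single i 1]

section aux

variable {F : Type*} [NormedAddCommGroup F] [InnerProductSpace ℝ F]

noncomputable def innerR (F : Type*) [NormedAddCommGroup F] [InnerProductSpace ℝ F] :
    F →L[ℝ] F →L[ℝ] ℝ :=
  (isBoundedBilinearMap_inner (𝕜 := ℝ) (E := F)).toContinuousLinearMap

@[simp] lemma innerR_apply (y u : F) : innerR F y u = inner ℝ y u := rfl

lemma hasFDerivAt_norm_ne {x : F} (hx : x ≠ 0) :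
    HasFDerivAt (fun y : F => ‖y‖) (‖x‖⁻¹ • innerR F x) x := by
  have h1 : HasFDerivAt (fun y : F => ‖y‖ ^ 2) (2 • innerSL ℝ x) x :=
    (hasStrictFDerivAt_norm_sq x).hasFDerivAt
  have h2 : HasDerivAt Real.sqrt (1 / (2 * Real.sqrt (‖x‖ ^ 2))) (‖x‖ ^ 2) :=
    Real.hasDerivAt_sqrt (pow_ne_zero 2 (norm_ne_zero_iff.2 hx))
  have h3 := h2.comp_hasFDerivAt x h1
  have he : (Real.sqrt ∘ fun y : F => ‖y‖ ^ 2) = fun y : F => ‖y‖ := by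
    funext y; simp [Function.comp, Real.sqrt_sq (norm_nonneg y)]
  rw [he] at h3
  refine h3.congr_fderiv ?_
  rw [Real.sqrt_sq (norm_nonneg x)]
  ext u
  have hxn : ‖x‖ ≠ 0 := norm_ne_zero_iff.2 hx
  simp only [ContinuousLinearMap.smul_apply, innerR_apply, innerSL_apply_apply, smul_eq_mul,
    nsmul_eq_mul, Nat.cast_ofNat, one_div]
  field_simp

end aux

lemma lap_radial {N : ℕ} (v v' v'' : ℝ → ℝ)
    (hv : ∀ t : ℝ, 0 < t → HasDerivAt v (v' t) t)
    (hv' : ∀ t : ℝ, 0 < t → HasDerivAt v' (v'' t) t)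
    (x : EuclideanSpace ℝ (Fin N)) (hx : 0 < ‖x‖) :
    lap (fun y => v ‖y‖) x = v'' ‖x‖ + ((N : ℝ) - 1) / ‖x‖ * v' ‖x‖ := by
  have hx0 : x ≠ 0 := norm_pos_iff.1 hx
  have hrne : ‖x‖ ≠ 0 := ne_of_gt hx
  set φ : EuclideanSpace ℝ (Fin N) → (EuclideanSpace ℝ (Fin N) →L[ℝ] ℝ) :=
    fun y => (v' ‖y‖ * ‖y‖⁻¹) • innerR (EuclideanSpace ℝ (Fin N)) y with hφ
  have hder : ∀ y : EuclideanSpace ℝ (Fin N), y ≠ 0 →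
      HasFDerivAt (fun z : EuclideanSpace ℝ (Fin N) => v ‖z‖) (φ y) y := by
    intro y hy
    have h1 := hasFDerivAt_norm_ne hy
    have h2 := (hv ‖y‖ (norm_pos_iff.2 hy)).comp_hasFDerivAt y h1
    have he : (v ∘ fun z : EuclideanSpace ℝ (Fin N) => ‖z‖)
        = fun z : EuclideanSpace ℝ (Fin N) => v ‖z‖ := rfl
    rw [he] at h2
    show HasFDerivAt _ ((v' ‖y‖ * ‖y‖⁻¹) • innerR (EuclideanSpace ℝ (Fin N)) y) y
    rw [← smul_smul]
    exact h2
  have heq : fderiv ℝ (fun z : EuclideanSpace ℝ (Fin N) => v ‖z‖) =ᶠ[nhds x] φ := by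
    filter_upwards [IsOpen.mem_nhds (isOpen_compl_singleton
      (x := (0 : EuclideanSpace ℝ (Fin N)))) (by simpa using hx0)] with y hy
    exact (hder y hy).fderiv
  set g' : ℝ := v'' ‖x‖ * ‖x‖⁻¹ + v' ‖x‖ * -(‖x‖ ^ 2)⁻¹ with hg'
  have hc : HasFDerivAt (fun y : EuclideanSpace ℝ (Fin N) => v' ‖y‖ * ‖y‖⁻¹)
      (g' • (‖x‖⁻¹ • innerR (EuclideanSpace ℝ (Fin N)) x)) x := by
    have hg : HasDerivAt (fun t : ℝ => v' t * t⁻¹) g' ‖x‖ :=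
      (hv' ‖x‖ hx).mul (hasDerivAt_inv hrne)
    exact hg.comp_hasFDerivAt x (hasFDerivAt_norm_ne hx0)
  set B : EuclideanSpace ℝ (Fin N) →L[ℝ] EuclideanSpace ℝ (Fin N) →L[ℝ] ℝ :=
    (v' ‖x‖ * ‖x‖⁻¹) • innerR (EuclideanSpace ℝ (Fin N))
      + (g' • (‖x‖⁻¹ • innerR (EuclideanSpace ℝ (Fin N)) x)).smulRight
          (innerR (EuclideanSpace ℝ (Fin N)) x) with hB
  have hφd : HasFDerivAt φ B x := hc.smul (innerR (EuclideanSpace ℝ (Fin N))).hasFDerivAt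
  have h2nd : fderiv ℝ (fderiv ℝ (fun z : EuclideanSpace ℝ (Fin N) => v ‖z‖)) x = B := by
    rw [heq.fderiv_eq]; exact hφd.fderiv
  have hterm : ∀ i : Fin N,
      iteratedFDeriv ℝ 2 (fun y : EuclideanSpace ℝ (Fin N) => v ‖y‖) x
        ![EuclideanSpace.single i 1, EuclideanSpace.single i 1]
      = (v' ‖x‖ * ‖x‖⁻¹) + g' * (‖x‖⁻¹ * (x i * x i)) := by
    intro i
    rw [iteratedFDeriv_two_apply, h2nd]
    simp only [hB, ContinuousLinearMap.add_apply, ContinuousLinearMap.smul_apply,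
      ContinuousLinearMap.smulRight_apply, innerR_apply, Matrix.cons_val_zero,
      Matrix.cons_val_one, Matrix.head_cons, smul_eq_mul]
    simp [EuclideanSpace.inner_single_left, EuclideanSpace.inner_single_right,
      EuclideanSpace.single_apply]
    ring
  unfold lap
  rw [Finset.sum_congr rfl (fun i _ => hterm i)]
  rw [Finset.sum_add_distrib, Finset.sum_const, Finset.card_univ, Fintype.card_fin,
    ← Finset.mul_sum, ← Finset.mul_sum]
  have hsum : ∑ i : Fin N, x i * x i = ‖x‖ ^ 2 := by
    have := real_inner_self_eq_norm_sq x
    rw [← this]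
    simp only [PiLp.inner_apply, RCLike.inner_apply, conj_trivial]
  rw [hsum]
  rw [hg']
  field_simp
  rw [nsmul_eq_mul]
  have key : ‖x‖ * (v' ‖x‖ / ‖x‖) = v' ‖x‖ := by field_simp
  linear_combination (N:ℝ) * key

theorem radial_barrier_exists (N : ℕ) (hN : 3 ≤ N) (Rh : ℝ) (hRh : 0 < Rh)
    (ρt : ℝ → ℝ) (hρtc : Continuous ρt) (hρtpos : ∀ t, 0 < ρt t)
    (hρtint : IntegrableOn (fun η => η * ρt η) (Ici Rh)) :
    ∃ v v' v'' : ℝ → ℝ,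
      (∀ t : ℝ, 0 < t → HasDerivAt v (v' t) t) ∧
      (∀ t : ℝ, 0 < t → HasDerivAt v' (v'' t) t) ∧
      ContDiffOn ℝ 2 v (Ici Rh) ∧
      (∀ r ∈ Ici Rh, 0 < v r) ∧
      AntitoneOn v (Ici Rh) ∧
      Tendsto v atTop (nhds 0) ∧
      (∀ r : ℝ, 0 < r → v'' r + ((N : ℝ) - 1) / r * v' r = -ρt r) := by
  set n : ℕ := N - 1 with hn
  have hn2 : 2 ≤ n := by omega
  have hcast : ((n : ℝ)) = (N : ℝ) - 1 := by
    rw [hn, Nat.cast_sub (by omega)]; norm_num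
  -- F
  set F : ℝ → ℝ := fun r => ∫ t in Rh..r, t ^ n * ρt t with hFdef
  have hFd : ∀ r : ℝ, HasDerivAt F (r ^ n * ρt r) r := fun r =>
    (((continuous_pow n).mul hρtc).integral_hasStrictDerivAt Rh r).hasDerivAt
  have hFc : Continuous F := continuous_iff_continuousAt.2 fun r => (hFd r).continuousAt
  have hFnonneg : ∀ s, Rh ≤ s → 0 ≤ F s := by
    intro s hs
    apply intervalIntegral.integral_nonneg hs
    intro t ht
    exact mul_nonneg (pow_nonneg (le_trans hRh.le ht.1) n) (hρtpos t).le
  have hFRh : F Rh = 0 := intervalIntegral.integral_same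
  -- h
  set h : ℝ → ℝ := fun s => (1 + F s) * (s ^ n)⁻¹ with hhdef
  set h' : ℝ → ℝ := fun s =>
    (s ^ n * ρt s) * (s ^ n)⁻¹ + (1 + F s) * (-((n : ℝ) * s ^ (n - 1)) / (s ^ n) ^ 2) with hh'def
  have hhd : ∀ s : ℝ, s ≠ 0 → HasDerivAt h (h' s) s := by
    intro s hs
    exact ((hFd s).const_add 1).mul ((hasDerivAt_pow n s).inv (pow_ne_zero n hs))
  have hhm : Measurable h :=
    (measurable_const.add hFc.measurable).mul ((continuous_pow n).measurable.inv)
  have hhcont : ∀ s : ℝ, s ≠ 0 → ContinuousAt h s := fun s hs => (hhd s hs).continuousAt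
  have hhco : ContinuousOn h (Ioi 0) := fun s hs =>
    (hhcont s (ne_of_gt hs)).continuousWithinAt
  have hhnonneg : ∀ s, Rh ≤ s → 0 ≤ h s := by
    intro s hs
    have h0 : (0:ℝ) < s := lt_of_lt_of_le hRh hs
    exact mul_nonneg (by linarith [hFnonneg s hs]) (inv_nonneg.2 (pow_nonneg h0.le n))
  have hhpos : ∀ s, Rh ≤ s → 0 < h s := by
    intro s hs
    have h0 : (0:ℝ) < s := lt_of_lt_of_le hRh hs
    exact mul_pos (by linarith [hFnonneg s hs]) (inv_pos.2 (pow_pos h0 n))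
  -- interval integrability of h
  have hint : ∀ a b : ℝ, 0 < a → 0 < b → IntervalIntegrable h volume a b := by
    intro a b ha hb
    apply ContinuousOn.intervalIntegrable
    apply hhco.mono
    intro s hs
    exact lt_of_lt_of_le (lt_min ha hb) hs.1
  -- H
  set H : ℝ → ℝ := fun r => ∫ s in Rh..r, h s with hHdef
  have hHd : ∀ r : ℝ, 0 < r → HasDerivAt H (h r) r := by
    intro r hr
    exact intervalIntegral.integral_hasDerivAt_right (hint Rh r hRh hr)
      hhm.stronglyMeasurable.stronglyMeasurableAtFilter
      (hhcont r (ne_of_gt hr))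
  have hHadd : ∀ a b : ℝ, Rh ≤ a → a ≤ b → H b = H a + ∫ s in a..b, h s := by
    intro a b ha hab
    have h1 := intervalIntegral.integral_add_adjacent_intervals
      (hint Rh a hRh (lt_of_lt_of_le hRh ha))
      (hint a b (lt_of_lt_of_le hRh ha) (lt_of_lt_of_le hRh (ha.trans hab)))
    rw [hHdef]; simp only []; linarith [h1]
  have hHmono : ∀ a b : ℝ, Rh ≤ a → a ≤ b → H a ≤ H b := by
    intro a b ha hab
    rw [hHadd a b ha hab]
    have : 0 ≤ ∫ s in a..b, h s :=
      intervalIntegral.integral_nonneg hab (fun s hs => hhnonneg s (ha.trans hs.1))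
    linarith
  -- integration by parts bound
  set c : ℝ := ((n - 1 : ℕ) : ℝ) with hcdef
  have hcne : c ≠ 0 := Nat.cast_ne_zero.2 (by omega)
  set w : ℝ → ℝ := fun s => -(c⁻¹ * (s ^ (n - 1))⁻¹) with hwdef
  have hwd : ∀ s : ℝ, s ≠ 0 → HasDerivAt w ((s ^ n)⁻¹) s := by
    intro s hs
    have h1 : HasDerivAt (fun s : ℝ => (s ^ (n-1))⁻¹)
        (-((((n-1 : ℕ)) : ℝ) * s ^ (n - 1 - 1)) / (s ^ (n-1)) ^ 2) s :=
      (hasDerivAt_pow (n-1) s).inv (pow_ne_zero _ hs)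
    have h2 := h1.const_mul (-(c⁻¹))
    have h3 : (fun s : ℝ => -c⁻¹ * (s ^ (n-1))⁻¹) = w := by
      funext s; rw [hwdef]; ring
    rw [h3] at h2
    refine h2.congr_deriv ?_
    have hpow : (s ^ (n-1)) ^ 2 = s ^ (n - 1 - 1) * s ^ n := by
      rw [← pow_mul, ← pow_add]; congr 1; omega
    rw [hpow, ← hcdef]
    have h4 : s ^ (n-1-1) ≠ 0 := pow_ne_zero _ hs
    have h5 : s ^ n ≠ 0 := pow_ne_zero _ hs
    field_simp
  set M : ℝ := c⁻¹ * (Rh ^ (n-1))⁻¹ + c⁻¹ * ∫ s in Ici Rh, s * ρt s with hMdef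
  have hbound : ∀ R : ℝ, Rh ≤ R → H R ≤ M := by
    intro R hR
    have hRpos : 0 < R := lt_of_lt_of_le hRh hR
    have huIcc : ∀ s ∈ uIcc Rh R, s ≠ 0 := by
      intro s hs
      rw [uIcc_of_le hR] at hs
      exact ne_of_gt (lt_of_lt_of_le hRh hs.1)
    have hparts := intervalIntegral.integral_mul_deriv_eq_deriv_mul
      (u := fun s => 1 + F s) (u' := fun s => s ^ n * ρt s) (v := w)
      (v' := fun s => (s ^ n)⁻¹) (a := Rh) (b := R)
      (fun s _ => (hFd s).const_add 1)
      (fun s hs => hwd s (huIcc s hs))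
      (((continuous_pow n).mul hρtc).intervalIntegrable _ _)
      (by
        apply ContinuousOn.intervalIntegrable
        intro s hs
        exact ((continuous_pow n).continuousOn.inv₀ fun t ht =>
          pow_ne_zero n (huIcc t ht)) s hs)
    have hHR : H R = ∫ s in Rh..R, (1 + F s) * (s ^ n)⁻¹ := rfl
    rw [hHR, hparts]
    have hwRh : w Rh = -(c⁻¹ * (Rh ^ (n-1))⁻¹) := rfl
    have hwR : w R ≤ 0 := by
      rw [hwdef]
      simp only [neg_nonpos]
      positivity
    have huR : 0 ≤ 1 + F R := by linarith [hFnonneg R hR]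
    have h1 : (1 + F R) * w R ≤ 0 := mul_nonpos_of_nonneg_of_nonpos huR hwR
    have h2 : ∫ s in Rh..R, (s ^ n * ρt s) * w s
        = -(c⁻¹ * ∫ s in Rh..R, s * ρt s) := by
      rw [← intervalIntegral.integral_const_mul, ← intervalIntegral.integral_neg]
      apply intervalIntegral.integral_congr
      intro s hs
      have hs0 : s ≠ 0 := huIcc s hs
      have hpow : s ^ n = s ^ (n-1) * s := by rw [← pow_succ]; congr 1; omega
      rw [hwdef]
      simp only []
      rw [hpow]
      have h4 : s ^ (n-1) ≠ 0 := pow_ne_zero _ hs0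
      field_simp
    have h3 : ∫ s in Rh..R, s * ρt s ≤ ∫ s in Ici Rh, s * ρt s := by
      rw [intervalIntegral.integral_of_le hR]
      apply setIntegral_mono_set hρtint
      · filter_upwards [ae_restrict_mem measurableSet_Ici] with s hs
        exact mul_nonneg (hRh.le.trans hs) (hρtpos s).le
      · exact HasSubset.Subset.eventuallyLE (fun s hs => le_of_lt hs.1)
    have hF0 : (1 + F Rh) * w Rh = -(c⁻¹ * (Rh ^ (n-1))⁻¹) := by
      rw [hFRh, hwRh]; ring
    rw [h2, hF0, hMdef]
    have hc0 : 0 ≤ c⁻¹ := inv_nonneg.2 (Nat.cast_nonneg _)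
    beta_reduce
    have h7 := mul_le_mul_of_nonneg_left h3 hc0
    have test : (1 + F R) * w R - -(c⁻¹ * (Rh ^ (n - 1))⁻¹) - -(c⁻¹ * ∫ (s : ℝ) in Rh..R, s * ρt s) ≤ c⁻¹ * (Rh ^ (n - 1))⁻¹ + c⁻¹ * ∫ (s : ℝ) in Ici Rh, s * ρt s := by
      clear_value n F h w c
      linarith [h1, h7]
    exact test
  -- limit
  set Hm : ℝ → ℝ := fun r => H (max r Rh) with hHmdef
  have hHmmono : Monotone Hm := fun a b hab =>
    hHmono _ _ (le_max_right _ _) (max_le_max hab le_rfl)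
  have hHmbdd : BddAbove (Set.range Hm) := by
    refine ⟨M, ?_⟩
    rintro y ⟨r, rfl⟩
    exact hbound _ (le_max_right _ _)
  set L : ℝ := ⨆ r, Hm r with hLdef
  have hHmtend : Tendsto Hm atTop (nhds L) := tendsto_atTop_ciSup hHmmono hHmbdd
  have hHtend : Tendsto H atTop (nhds L) := by
    apply hHmtend.congr'
    filter_upwards [eventually_ge_atTop Rh] with r hr
    simp only [hHmdef]
    rw [max_eq_left hr]
  have hLge : ∀ r, Rh ≤ r → H r ≤ L := by
    intro r hr
    have h5 : Hm r = H r := by simp only [hHmdef]; rw [max_eq_left hr]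
    have h6 := le_ciSup hHmbdd r
    rw [h5] at h6
    exact h6
  -- v
  refine ⟨fun r => L - H r, fun r => -h r, fun r => -h' r, ?_, ?_, ?_, ?_, ?_, ?_, ?_⟩
  · intro t ht
    simpa using (hHd t ht).const_sub L
  · intro t ht
    exact (hhd t (ne_of_gt ht)).neg
  · -- ContDiffOn
    have hmain : ContDiffOn ℝ 2 (fun r => L - H r) (Ioi 0) := by
      rw [show (2 : WithTop ℕ∞) = 1 + 1 by norm_num,
        contDiffOn_succ_iff_deriv_of_isOpen isOpen_Ioi]
      refine ⟨fun r hr => ((hHd r hr).const_sub L).differentiableAt.differentiableWithinAt,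
        by simp, ?_⟩
      have hderiv : ∀ r ∈ Ioi (0:ℝ), deriv (fun r => L - H r) r = -h r := fun r hr =>
        ((hHd r hr).const_sub L).deriv
      refine ContDiffOn.congr ?_ hderiv
      rw [show (1 : WithTop ℕ∞) = 0 + 1 by norm_num,
        contDiffOn_succ_iff_deriv_of_isOpen isOpen_Ioi]
      refine ⟨fun r hr => ((hhd r (ne_of_gt hr)).neg).differentiableAt.differentiableWithinAt,
        by simp, ?_⟩
      have hderiv2 : ∀ r ∈ Ioi (0:ℝ), deriv (fun r => -h r) r = -h' r := fun r hr =>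
        ((hhd r (ne_of_gt hr)).neg).deriv
      refine ContDiffOn.congr ?_ hderiv2
      rw [contDiffOn_zero]
      apply ContinuousOn.neg
      intro s hs
      have hs0 : s ≠ 0 := ne_of_gt hs
      have : ContinuousAt h' s := by
        apply ContinuousAt.add
        · exact (((continuous_pow n).mul hρtc).continuousAt).mul
            (((continuous_pow n).continuousAt).inv₀ (pow_ne_zero n hs0))
        · exact ((continuous_const.add hFc).continuousAt).mul
            ((((continuous_const.mul (continuous_pow (n-1))).neg).continuousAt).div
              (((continuous_pow n).pow 2).continuousAt)
              (pow_ne_zero 2 (pow_ne_zero n hs0)))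
      exact this.continuousWithinAt
    exact hmain.mono (fun r hr => lt_of_lt_of_le hRh hr)
  · -- positivity
    intro r hr
    have hr' : Rh ≤ r := hr
    have hpos : 0 < ∫ s in r..(r+1), h s := by
      apply intervalIntegral.intervalIntegral_pos_of_pos_on
        (hint r (r+1) (lt_of_lt_of_le hRh hr') (by linarith [lt_of_lt_of_le hRh hr']))
      · intro s hs
        exact hhpos s (hr'.trans hs.1.le)
      · linarith
    have h1 : H (r+1) = H r + ∫ s in r..(r+1), h s := hHadd r (r+1) hr' (by linarith)
    have h2 : H (r+1) ≤ L := hLge (r+1) (by linarith)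
    simp only [sub_pos]
    linarith
  · -- antitone
    intro a ha b hb hab
    simp only []
    linarith [hHmono a b ha hab]
  · -- tendsto
    simpa using (tendsto_const_nhds (x := L) (f := atTop (α := ℝ))).sub hHtend
  · -- the ODE identity
    intro r hr
    have hrne : r ≠ 0 := ne_of_gt hr
    have hρteq2 : h' r + ((N:ℝ) - 1) / r * h r = ρt r := by
      rw [← hcast, hh'def, hhdef]
      simp only []
      have hpow : r ^ n = r ^ (n-1) * r := by rw [← pow_succ]; congr 1; omega
      rw [hpow]
      have h4 : r ^ (n-1) ≠ 0 := pow_ne_zero _ hrne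
      field_simp
      ring
    have : -h' r + ((N:ℝ) - 1) / r * (-h r) = -(h' r + ((N:ℝ)-1)/r * h r) := by ring
    rw [this, hρteq2]


/-- if `ρ` is dominated at infinity by a radial profile `ρ̄` with
`∫ η ρ̄(η) dη < ∞`, there is a positive nonincreasing `C²` radial barrier `V`
vanishing at infinity with `ΔV ≤ -ρ` outside `B_R̂`. -/
theorem radial_barrier (N : ℕ) (hN : 3 ≤ N) (Rh : ℝ) (hRh : 0 < Rh)
    (ρ : EuclideanSpace ℝ (Fin N) → ℝ) (hρc : Continuous ρ) (hρpos : ∀ x, 0 < ρ x)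
    (ρbar : ℝ → ℝ) (hρbarc : ContinuousOn ρbar (Ici Rh))
    (hρbarle : ∀ x : EuclideanSpace ℝ (Fin N), Rh ≤ ‖x‖ → ρ x ≤ ρbar ‖x‖)
    (hρbarint : IntegrableOn (fun η => η * ρbar η) (Ici Rh)) :
    ∃ v : ℝ → ℝ, ContDiffOn ℝ 2 v (Ici Rh) ∧
      (∀ r ∈ Ici Rh, 0 < v r) ∧
      AntitoneOn v (Ici Rh) ∧
      Tendsto v atTop (nhds 0) ∧
      ∀ x : EuclideanSpace ℝ (Fin N), Rh < ‖x‖ →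
        lap (fun y : EuclideanSpace ℝ (Fin N) => v ‖y‖) x ≤ -ρ x := by
  have i0 : Fin N := ⟨0, by omega⟩
  set ρt : ℝ → ℝ := fun t => ρbar (max t Rh) with hρtdef
  have hρtc : Continuous ρt :=
    hρbarc.comp_continuous (continuous_id.max continuous_const) (fun t => mem_Ici.2 (le_max_right _ _))
  have hρtpos : ∀ t, 0 < ρt t := by
    intro t
    have hm : Rh ≤ max t Rh := le_max_right _ _
    have hxn : ‖(max t Rh) • EuclideanSpace.single i0 (1:ℝ)‖ = max t Rh := by
      rw [norm_smul, EuclideanSpace.norm_single]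
      simp [abs_of_pos (lt_of_lt_of_le hRh hm)]
    have h1 := hρbarle ((max t Rh) • EuclideanSpace.single i0 (1:ℝ)) (by rw [hxn]; exact hm)
    rw [hxn] at h1
    exact lt_of_lt_of_le (hρpos _) h1
  have hρtint : IntegrableOn (fun η => η * ρt η) (Ici Rh) := by
    apply hρbarint.congr_fun ?_ measurableSet_Ici
    intro η hη
    simp only [hρtdef]
    rw [max_eq_left hη]
  obtain ⟨v, v', v'', hv, hv', hC2, hpos, hanti, htend, hode⟩ :=
    radial_barrier_exists N hN Rh hRh ρt hρtc hρtpos hρtint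
  refine ⟨v, hC2, hpos, hanti, htend, ?_⟩
  intro x hx
  have hr : 0 < ‖x‖ := hRh.trans hx
  rw [lap_radial v v' v'' hv hv' x hr]
  have h1 := hode ‖x‖ hr
  have h2 : ρ x ≤ ρbar ‖x‖ := hρbarle x hx.le
  have h3 : ρt ‖x‖ = ρbar ‖x‖ := by
    simp only [hρtdef]; rw [max_eq_left hx.le]
  rw [h1, h3]
  linarith
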